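/- Let H be a real inner product space, B > 0, λ > 0, and let x_1,…,x_k ∈ H with ‖x_i‖ ≤ B for all i. Then the information gain satisfies γ(λ; x_1,…,x_k) = log det(I_k + λ⁻¹ K_k) ≤ k · log(1 + B²/λ), where K_k is the k×k Gram matrix (K_k)_{ij} = ⟪x_i, x_j⟫. -/

import Mathlib

open scoped RealInnerProductSpace BigOperators

/-- Gram matrix `(K_T)_{ij} = ⟪x_i, x_j⟫` of a tuple of points. -/
noncomputable def gram {H : Type*} [NormedAddCommGroup H] [InnerProductSpace ℝ H]
    {T : ℕ} (x : Fin T → H) : Matrix (Fin T) (Fin T) ℝ :=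
  Matrix.of fun i j => ⟪x i, x j⟫

/-- Information gain `γ(λ; x_1,…,x_T) = log det (I + λ⁻¹ K_T)`. -/
noncomputable def infoGain {H : Type*} [NormedAddCommGroup H] [InnerProductSpace ℝ H]
    (lam : ℝ) {T : ℕ} (x : Fin T → H) : ℝ :=
  Real.log (1 + lam⁻¹ • gram x).det

open Matrix in
lemma trace_eq_sum_eigenvalues' {n : Type*} [Fintype n] [DecidableEq n] {A : Matrix n n ℝ}
    (hA : A.IsHermitian) : A.trace = ∑ i, hA.eigenvalues i := by
  simpa using hA.trace_eq_sum_eigenvalues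

open Matrix in
lemma gram_posSemidef {H : Type*} [NormedAddCommGroup H] [InnerProductSpace ℝ H]
    {k : ℕ} (x : Fin k → H) : (gram x).PosSemidef := by
  refine Matrix.PosSemidef.of_dotProduct_mulVec_nonneg ?_ ?_
  · ext i j
    simp [_root_.gram, Matrix.conjTranspose_apply, real_inner_comm]
  · intro v
    have key : dotProduct (star v) (_root_.gram x *ᵥ v)
        = ⟪∑ i, v i • x i, ∑ i, v i • x i⟫ := by
      rw [sum_inner]
      simp only [dotProduct, Matrix.mulVec, _root_.gram, Matrix.of_apply, inner_sum,
        real_inner_smul_left, real_inner_smul_right, Pi.star_apply, star_trivial,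
        Finset.mul_sum]
      refine Finset.sum_congr rfl fun i _ => Finset.sum_congr rfl fun j _ => by ring
    rw [key]
    exact real_inner_self_nonneg

/-- **Elliptic potential bound.** If `‖x_i‖ ≤ B` for all `i`, then
`γ(λ; x_1,…,x_k) = log det(I_k + λ⁻¹ K_k) ≤ k · log(1 + B²/λ)`. -/
theorem infoGain_le_of_norm_le
    {H : Type*} [NormedAddCommGroup H] [InnerProductSpace ℝ H]
    (B lam : ℝ) (hB : 0 < B) (hlam : 0 < lam)
    {k : ℕ} (x : Fin k → H) (hx : ∀ i, ‖x i‖ ≤ B) :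
    infoGain lam x ≤ k * Real.log (1 + B ^ 2 / lam) := by
  rcases Nat.eq_zero_or_pos k with hk | hk
  · subst hk
    simp [infoGain, Matrix.det_isEmpty]
  have hkR : (0:ℝ) < k := by exact_mod_cast hk
  set K := gram x with hK
  have hKpsd : K.PosSemidef := gram_posSemidef x
  -- lam⁻¹ • K is PSD
  have hsmul : (lam⁻¹ • K).PosSemidef := by
    refine Matrix.PosSemidef.of_dotProduct_mulVec_nonneg ?_ ?_
    · show (lam⁻¹ • K).conjTranspose = lam⁻¹ • K
      rw [Matrix.conjTranspose_smul, star_trivial, hKpsd.1]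
    · intro v
      have := hKpsd.dotProduct_mulVec_nonneg v
      simp only [Matrix.smul_mulVec, dotProduct_smul, smul_eq_mul]
      positivity
  set M := 1 + lam⁻¹ • K with hM
  have hMpd : M.PosDef := Matrix.PosDef.add_posSemidef Matrix.PosDef.one hsmul
  have hMh : M.IsHermitian := hMpd.1
  set μ := hMh.eigenvalues with hμ
  have hμ0 : ∀ i, 0 ≤ μ i := hMpd.posSemidef.eigenvalues_nonneg
  -- determinant = product of eigenvalues
  have hdet : M.det = ∏ i, μ i := by
    have := hMh.det_eq_prod_eigenvalues
    simpa using this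
  -- trace bound
  have htr : M.trace = ∑ i, μ i := trace_eq_sum_eigenvalues' hMh
  have htrK : K.trace = ∑ i, ‖x i‖ ^ 2 := by
    simp [Matrix.trace, Matrix.diag, hK, gram, real_inner_self_eq_norm_sq]
  have htr_le : ∑ i, μ i ≤ k * (1 + B ^ 2 / lam) := by
    rw [← htr, hM, Matrix.trace_add, Matrix.trace_smul, Matrix.trace_one, htrK]
    have : ∑ i, ‖x i‖ ^ 2 ≤ ∑ _i : Fin k, B ^ 2 := by
      refine Finset.sum_le_sum fun i _ => ?_
      have := hx i
      nlinarith [norm_nonneg (x i)]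
    simp only [Finset.sum_const, Finset.card_univ, Fintype.card_fin, nsmul_eq_mul,
      smul_eq_mul] at this ⊢
    rw [div_eq_inv_mul]
    nlinarith [inv_pos.mpr hlam]
  set C := 1 + B ^ 2 / lam with hC
  have hC1 : (1:ℝ) ≤ C := by
    have : 0 < B ^ 2 / lam := by positivity
    simp only [hC]; linarith
  -- AM-GM
  have hamgm : ∏ i, (μ i) ^ ((k:ℝ)⁻¹) ≤ ∑ i, (k:ℝ)⁻¹ * μ i := by
    refine Real.geom_mean_le_arith_mean_weighted Finset.univ (fun _ => (k:ℝ)⁻¹) μ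
      (fun _ _ => by positivity) ?_ (fun i _ => hμ0 i)
    simp [Finset.sum_const, Finset.card_univ]
    field_simp
  have hmean_le : ∑ i, (k:ℝ)⁻¹ * μ i ≤ C := by
    rw [← Finset.mul_sum, inv_mul_le_iff₀ hkR]
    linarith [htr_le]
  have hprod_le : ∏ i, μ i ≤ C ^ k := by
    have h1 : (∏ i, (μ i) ^ ((k:ℝ)⁻¹)) ^ k ≤ C ^ k := by
      refine pow_le_pow_left₀ ?_ (hamgm.trans hmean_le) k
      exact Finset.prod_nonneg fun i _ => Real.rpow_nonneg (hμ0 i) _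
    calc ∏ i, μ i = (∏ i, (μ i) ^ ((k:ℝ)⁻¹)) ^ k := by
          rw [← Finset.prod_pow]
          refine Finset.prod_congr rfl fun i _ => ?_
          rw [← Real.rpow_natCast ((μ i) ^ ((k:ℝ)⁻¹)) k, ← Real.rpow_mul (hμ0 i),
            inv_mul_cancel₀ (ne_of_gt hkR), Real.rpow_one]
      _ ≤ C ^ k := h1
  have hdetpos : 0 < M.det := hMpd.det_pos
  have : Real.log M.det ≤ Real.log (C ^ k) := by
    apply Real.log_le_log hdetpos
    rw [hdet]; exact hprod_le
  rw [Real.log_pow] at this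
  simpa [infoGain, hM, hK, hC] using this
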